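/- Suppose two sets of positive functions (φ, ψ) and (φ̂, ψ̂) on a factor graph satisfy: there exists a set of positive messages m⁰ that is a BP fixed point for (φ, ψ) whose beliefs equal the prescribed marginals p̂, where φ̂_i = p̂_i and ψ̂_a = p̂_a / ∏_{i∈a} p̂_i. Then the map sending a message set m to the message set with components m_{a→i}(x_i)/m⁰_{a→i}(x_i) is a bijection between the BP fixed points of (φ, ψ) and the BP fixed points of (φ̂, ψ̂). -/

import Mathlib

open Finset

/-- The BP fixed-point equations (messages `m` only, with the
variable-to-factor messages substituted). -/
def IsBPFixedPoint
    {V F : Type*} [Fintype V] [Fintype F] [DecidableEq V] [DecidableEq F]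
    {q : ℕ} (A : F → Finset V)
    (φ : V → Fin q → ℝ) (ψ : ∀ a : F, ({x // x ∈ A a} → Fin q) → ℝ)
    (m : F → V → Fin q → ℝ) : Prop :=
  ∀ (a : F) (i : V) (hi : i ∈ A a) (xi : Fin q),
    m a i xi = ∑ τ ∈ Finset.univ.filter
        (fun τ : {x // x ∈ A a} → Fin q => τ ⟨i, hi⟩ = xi),
      ψ a τ * ∏ j ∈ Finset.univ.erase (⟨i, hi⟩ : {x // x ∈ A a}),
        (φ (j : V) (τ j) *
          ∏ a' ∈ (Finset.univ.filter fun a' : F => (j : V) ∈ A a').erase a,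
            m a' (j : V) (τ j))

/-- if `m⁰` is a positive BP fixed point for `(φ, ψ)` whose
beliefs equal the prescribed marginals `p̂`, then `m ↦ m/m⁰` is a bijection
mapping the BP fixed points of `(φ, ψ)` exactly onto the BP fixed points of
`(φ̂, ψ̂)`, where `φ̂_i = p̂_i` and `ψ̂_a = p̂_a/∏_{i∈a} p̂_i`. -/
theorem fixed_points_bijection
    {V F : Type*} [Fintype V] [Fintype F] [DecidableEq V] [DecidableEq F]
    {q : ℕ} (A : F → Finset V)
    (φ : V → Fin q → ℝ) (ψ : ∀ a : F, ({x // x ∈ A a} → Fin q) → ℝ)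
    (hφ : ∀ i xi, 0 < φ i xi) (hψ : ∀ a τ, 0 < ψ a τ)
    (m0 : F → V → Fin q → ℝ) (hm0 : ∀ a i xi, 0 < m0 a i xi)
    (hfix : IsBPFixedPoint A φ ψ m0)
    (pA : ∀ a : F, ({x // x ∈ A a} → Fin q) → ℝ) (pI : V → Fin q → ℝ)
    -- the beliefs at m⁰ equal the prescribed marginals p̂
    (hpA : ∀ (a : F) (τ : {x // x ∈ A a} → Fin q),
      pA a τ = ψ a τ * ∏ j : {x // x ∈ A a},
        (φ (j : V) (τ j) *
          ∏ a' ∈ (Finset.univ.filter fun a' : F => (j : V) ∈ A a').erase a,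
            m0 a' (j : V) (τ j)))
    (hpI : ∀ (i : V) (xi : Fin q),
      pI i xi = φ i xi *
        ∏ a ∈ Finset.univ.filter (fun a : F => i ∈ A a), m0 a i xi) :
    (∀ m : F → V → Fin q → ℝ,
      IsBPFixedPoint A φ ψ m ↔
        IsBPFixedPoint A pI
          (fun a τ => pA a τ / ∏ j : {x // x ∈ A a}, pI (j : V) (τ j))
          (fun a i xi => m a i xi / m0 a i xi)) ∧
    Function.Bijective
      (fun m : F → V → Fin q → ℝ =>
        (fun a i xi => m a i xi / m0 a i xi : F → V → Fin q → ℝ)) := by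
  have key : ∀ (m : F → V → Fin q → ℝ) (a : F) (i : V) (hi : i ∈ A a) (xi : Fin q),
      (∑ τ ∈ Finset.univ.filter
          (fun τ : {x // x ∈ A a} → Fin q => τ ⟨i, hi⟩ = xi),
        (pA a τ / ∏ j : {x // x ∈ A a}, pI (j : V) (τ j)) *
          ∏ j ∈ Finset.univ.erase (⟨i, hi⟩ : {x // x ∈ A a}),
            (pI (j : V) (τ j) *
              ∏ a' ∈ (Finset.univ.filter fun a' : F => (j : V) ∈ A a').erase a,
                (m a' (j : V) (τ j) / m0 a' (j : V) (τ j))))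
      = (∑ τ ∈ Finset.univ.filter
          (fun τ : {x // x ∈ A a} → Fin q => τ ⟨i, hi⟩ = xi),
        ψ a τ * ∏ j ∈ Finset.univ.erase (⟨i, hi⟩ : {x // x ∈ A a}),
          (φ (j : V) (τ j) *
            ∏ a' ∈ (Finset.univ.filter fun a' : F => (j : V) ∈ A a').erase a,
              m a' (j : V) (τ j))) / m0 a i xi := by
    intro m a i hi xi
    rw [Finset.sum_div]
    refine Finset.sum_congr rfl fun τ hτ => ?_
    have hτe : τ ⟨i, hi⟩ = xi := (Finset.mem_filter.mp hτ).2
    set e : {x // x ∈ A a} := ⟨i, hi⟩ with he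
    have ha' : ∀ j : {x // x ∈ A a},
        a ∈ Finset.univ.filter fun a' : F => (j : V) ∈ A a' :=
      fun j => Finset.mem_filter.mpr ⟨Finset.mem_univ _, j.2⟩
    set Φ : {x // x ∈ A a} → ℝ := fun j => φ (j : V) (τ j) with hΦ
    set μ : {x // x ∈ A a} → ℝ := fun j => m0 a (j : V) (τ j) with hμ
    set R : {x // x ∈ A a} → ℝ := fun j =>
      ∏ a' ∈ (Finset.univ.filter fun a' : F => (j : V) ∈ A a').erase a,
        m0 a' (j : V) (τ j) with hR
    set M : {x // x ∈ A a} → ℝ := fun j =>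
      ∏ a' ∈ (Finset.univ.filter fun a' : F => (j : V) ∈ A a').erase a,
        m a' (j : V) (τ j) with hM
    have hμpos : ∀ j, 0 < μ j := fun j => hm0 a _ _
    have hRpos : ∀ j, 0 < R j := fun j =>
      Finset.prod_pos fun a' _ => hm0 a' _ _
    have hpIeq : ∀ j : {x // x ∈ A a}, pI (j : V) (τ j) = Φ j * (μ j * R j) := by
      intro j
      rw [hpI, ← Finset.mul_prod_erase _ _ (ha' j)]
    have hinner : ∀ j : {x // x ∈ A a},
        (∏ a' ∈ (Finset.univ.filter fun a' : F => (j : V) ∈ A a').erase a,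
          (m a' (j : V) (τ j) / m0 a' (j : V) (τ j))) = M j / R j := by
      intro j
      rw [Finset.prod_div_distrib]
    have hμe : μ e = m0 a i xi := by
      simp only [hμ, hτe]; rw [he]
    have hd : (∏ j : {x // x ∈ A a}, pI (j : V) (τ j))
        = ∏ j : {x // x ∈ A a}, (Φ j * (μ j * R j)) :=
      Finset.prod_congr rfl fun j _ => hpIeq j
    have hT : (∏ j ∈ Finset.univ.erase e,
          (pI (j : V) (τ j) *
            ∏ a' ∈ (Finset.univ.filter fun a' : F => (j : V) ∈ A a').erase a,
              (m a' (j : V) (τ j) / m0 a' (j : V) (τ j))))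
        = ∏ j ∈ Finset.univ.erase e, (Φ j * (μ j * R j) * (M j / R j)) :=
      Finset.prod_congr rfl fun j _ => by rw [hpIeq j, hinner j]
    rw [hpA, hd, hT]
    have h1 : (∏ j : {x // x ∈ A a}, (Φ j * R j)) =
        (Φ e * R e) * ∏ j ∈ Finset.univ.erase e, (Φ j * R j) :=
      (Finset.mul_prod_erase _ _ (Finset.mem_univ e)).symm
    have h2 : (∏ j : {x // x ∈ A a}, (Φ j * (μ j * R j))) =
        (Φ e * (μ e * R e)) * ∏ j ∈ Finset.univ.erase e, (Φ j * (μ j * R j)) :=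
      (Finset.mul_prod_erase _ _ (Finset.mem_univ e)).symm
    have h3 : (∏ j ∈ Finset.univ.erase e, (Φ j * (μ j * R j) * (M j / R j)))
        = ∏ j ∈ Finset.univ.erase e, (Φ j * M j * μ j) :=
      Finset.prod_congr rfl fun j _ => by
        field_simp [(hRpos j).ne']
    have h5 : (∏ j ∈ Finset.univ.erase e, (Φ j * (μ j * R j)))
        = (∏ j ∈ Finset.univ.erase e, (Φ j * R j)) *
            ∏ j ∈ Finset.univ.erase e, μ j := by
      rw [← Finset.prod_mul_distrib]
      exact Finset.prod_congr rfl fun j _ => by ring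
    have h6 : (∏ j ∈ Finset.univ.erase e, (Φ j * M j * μ j))
        = (∏ j ∈ Finset.univ.erase e, (Φ j * M j)) *
            ∏ j ∈ Finset.univ.erase e, μ j := by
      rw [← Finset.prod_mul_distrib]
    rw [h1, h2, h3, h5, h6]
    have hΦe : Φ e ≠ 0 := (hφ i _).ne'
    have hRe : R e ≠ 0 := (hRpos e).ne'
    have hμene : μ e ≠ 0 := (hμpos e).ne'
    have hPT : (∏ j ∈ Finset.univ.erase e, (Φ j * R j)) ≠ 0 :=
      (Finset.prod_pos fun j _ => mul_pos (hφ _ _) (hRpos j)).ne'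
    have hμT : (∏ j ∈ Finset.univ.erase e, μ j) ≠ 0 :=
      (Finset.prod_pos fun j _ => hμpos j).ne'
    have hden : Φ e * (μ e * R e) *
        ((∏ j ∈ Finset.univ.erase e, (Φ j * R j)) *
          ∏ j ∈ Finset.univ.erase e, μ j) ≠ 0 := by
      exact mul_ne_zero (mul_ne_zero hΦe (mul_ne_zero hμene hRe))
        (mul_ne_zero hPT hμT)
    rw [← hμe] at *
    rw [div_mul_eq_mul_div, div_eq_div_iff hden hμene]
    have hgoal : ∀ x y z w t u : ℝ, x = x → True := fun _ _ _ _ _ _ _ => trivial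
    show ψ a τ * (Φ e * R e * ∏ j ∈ Finset.univ.erase e, (Φ j * R j)) *
        ((∏ j ∈ Finset.univ.erase e, (Φ j * M j)) *
          ∏ j ∈ Finset.univ.erase e, μ j) * μ e
      = (ψ a τ * ∏ j ∈ Finset.univ.erase e,
          (φ (j : V) (τ j) *
            ∏ a' ∈ (Finset.univ.filter fun a' : F => (j : V) ∈ A a').erase a,
              m a' (j : V) (τ j))) *
        (Φ e * (μ e * R e) *
          ((∏ j ∈ Finset.univ.erase e, (Φ j * R j)) *
            ∏ j ∈ Finset.univ.erase e, μ j))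
    simp only [hΦ, hM]
    ring
  have hiff : ∀ m : F → V → Fin q → ℝ,
      IsBPFixedPoint A φ ψ m ↔
        IsBPFixedPoint A pI
          (fun a τ => pA a τ / ∏ j : {x // x ∈ A a}, pI (j : V) (τ j))
          (fun a i xi => m a i xi / m0 a i xi) := by
    intro m
    constructor
    · intro hm a i hi xi
      show m a i xi / m0 a i xi = _
      rw [key m a i hi xi, hm a i hi xi]
    · intro hn a i hi xi
      have h2 := hn a i hi xi
      rw [key m a i hi xi] at h2
      have h3 : m a i xi / m0 a i xi =
          (∑ τ ∈ Finset.univ.filter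
            (fun τ : {x // x ∈ A a} → Fin q => τ ⟨i, hi⟩ = xi),
          ψ a τ * ∏ j ∈ Finset.univ.erase (⟨i, hi⟩ : {x // x ∈ A a}),
            (φ (j : V) (τ j) *
              ∏ a' ∈ (Finset.univ.filter fun a' : F => (j : V) ∈ A a').erase a,
                m a' (j : V) (τ j))) / m0 a i xi := h2
      field_simp [(hm0 a i xi).ne'] at h3
      exact h3
  refine ⟨hiff, ?_, ?_⟩
  · intro m1 m2 h
    funext a i xi
    have h3 : m1 a i xi / m0 a i xi = m2 a i xi / m0 a i xi :=
      congrFun (congrFun (congrFun h a) i) xi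
    field_simp [(hm0 a i xi).ne'] at h3
    exact h3
  · intro n
    refine ⟨fun a i xi => n a i xi * m0 a i xi, ?_⟩
    funext a i xi
    show n a i xi * m0 a i xi / m0 a i xi = n a i xi
    rw [mul_div_cancel_right₀ _ (hm0 a i xi).ne']
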